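/- With γ(z) = [[zA-1, zB†],[zB, zD - z² - 1]], the upper-left n×n block of the matrix -γ(z)⁻¹γ(1/z) equals S(z) = -Q(z)⁻¹Q(1/z), and the lower-right m×m block equals -z⁻² times the identity, whenever all inverses exist. -/

import Mathlib

open Matrix

/-- `Q(z) = 1 - z (A + Bᴴ (z⁻¹ + z - D)⁻¹ B)`. -/
noncomputable def Qmat {n m : ℕ} (A : Matrix (Fin n) (Fin n) ℂ)
    (B : Matrix (Fin m) (Fin n) ℂ) (D : Matrix (Fin m) (Fin m) ℂ) (z : ℂ) :
    Matrix (Fin n) (Fin n) ℂ :=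
  1 - z • (A + Bᴴ * ((z⁻¹ + z) • (1 : Matrix (Fin m) (Fin m) ℂ) - D)⁻¹ * B)

/-- `γ(z) = [[zA - 1, zBᴴ], [zB, zD - z² - 1]]`. -/
noncomputable def gamBlocks {n m : ℕ} (A : Matrix (Fin n) (Fin n) ℂ)
    (B : Matrix (Fin m) (Fin n) ℂ) (D : Matrix (Fin m) (Fin m) ℂ) (z : ℂ) :
    Matrix (Fin n ⊕ Fin m) (Fin n ⊕ Fin m) ℂ :=
  Matrix.fromBlocks (z • A - 1) (z • Bᴴ) (z • B) (z • D - z ^ 2 • 1 - 1)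

theorem stmt4 {n m : ℕ} (A : Matrix (Fin n) (Fin n) ℂ)
    (D : Matrix (Fin m) (Fin m) ℂ) (B : Matrix (Fin m) (Fin n) ℂ)
    (z : ℂ) (hz : z ≠ 0)
    (hg : IsUnit (gamBlocks A B D z).det)
    (hgi : IsUnit (gamBlocks A B D z⁻¹).det)
    (hinv : IsUnit (z • D - z ^ 2 • (1 : Matrix (Fin m) (Fin m) ℂ) - 1).det)
    (hinvi : IsUnit (z⁻¹ • D - z⁻¹ ^ 2 • (1 : Matrix (Fin m) (Fin m) ℂ) - 1).det)
    (hQ : IsUnit (Qmat A B D z).det) :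
    (-((gamBlocks A B D z)⁻¹ * gamBlocks A B D z⁻¹)).toBlocks₁₁ =
        -((Qmat A B D z)⁻¹ * Qmat A B D z⁻¹) ∧
      (-((gamBlocks A B D z)⁻¹ * gamBlocks A B D z⁻¹)).toBlocks₂₂ =
        -(z⁻¹ ^ 2) • (1 : Matrix (Fin m) (Fin m) ℂ) := by
  set R : Matrix (Fin m) (Fin m) ℂ := (z⁻¹ + z) • (1 : Matrix (Fin m) (Fin m) ℂ) - D with hRdef
  have hH : (z • D - z ^ 2 • (1 : Matrix (Fin m) (Fin m) ℂ) - 1) = (-z) • R := by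
    rw [hRdef, smul_sub, smul_smul]
    have : -z * (z⁻¹ + z) = -(1 + z ^ 2) := by field_simp
    rw [this]; module
  have hH' : (z⁻¹ • D - z⁻¹ ^ 2 • (1 : Matrix (Fin m) (Fin m) ℂ) - 1) = (-z⁻¹) • R := by
    rw [hRdef, smul_sub, smul_smul]
    have : -z⁻¹ * (z⁻¹ + z) = -(z⁻¹ ^ 2 + 1) := by field_simp
    rw [this]; module
  have hR : IsUnit R.det := by
    rw [hH, Matrix.det_smul] at hinv
    exact (IsUnit.mul_iff.mp hinv).2
  have hRR : R * R⁻¹ = 1 := Matrix.mul_nonsing_inv _ hR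
  have hQz : -(Qmat A B D z) = z • A + z • (Bᴴ * (R⁻¹ * B)) - 1 := by
    simp only [Qmat, ← hRdef, Matrix.mul_assoc]
    module
  have hQz' : -(Qmat A B D z⁻¹) = z⁻¹ • A + z⁻¹ • (Bᴴ * (R⁻¹ * B)) - 1 := by
    simp only [Qmat, inv_inv]
    rw [add_comm z z⁻¹, ← hRdef]
    simp only [Matrix.mul_assoc]
    module
  set K : Matrix (Fin n) (Fin n) ℂ := (Qmat A B D z)⁻¹ * Qmat A B D z⁻¹ with hKdef
  have hQK : Qmat A B D z * K = Qmat A B D z⁻¹ := by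
    rw [hKdef, ← Matrix.mul_assoc, Matrix.mul_nonsing_inv _ hQ, Matrix.one_mul]
  set Y : Matrix (Fin m) (Fin n) ℂ := R⁻¹ * (B * K - (z⁻¹ ^ 2) • B) with hYdef
  set M : Matrix (Fin n ⊕ Fin m) (Fin n ⊕ Fin m) ℂ :=
    Matrix.fromBlocks K 0 Y ((z⁻¹ ^ 2) • 1) with hMdef
  -- the key multiplicative identity
  have key : (z • A + z • (Bᴴ * (R⁻¹ * B)) - 1) * K
      = z⁻¹ • A + z⁻¹ • (Bᴴ * (R⁻¹ * B)) - 1 := by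
    rw [← hQz, Matrix.neg_mul, hQK, hQz']
  have hRY : R * Y = B * K - (z⁻¹ ^ 2) • B := by
    rw [hYdef, ← Matrix.mul_assoc, hRR, Matrix.one_mul]
  have h11 : (z • A - 1) * K + (z • Bᴴ) * Y = z⁻¹ • A - 1 := by
    have s1 : z * z⁻¹ ^ 2 = z⁻¹ := by field_simp
    have hBY : (z • Bᴴ) * Y = z • (Bᴴ * (R⁻¹ * (B * K))) - z⁻¹ • (Bᴴ * (R⁻¹ * B)) := by
      rw [hYdef]
      simp only [Matrix.smul_mul, Matrix.mul_sub, Matrix.mul_smul, smul_sub, smul_smul]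
      rw [show z⁻¹ ^ 2 * z = z⁻¹ from by field_simp]
    have e1 : (z • A + z • (Bᴴ * (R⁻¹ * B)) - 1) * K
        = (z • A - 1) * K + z • (Bᴴ * (R⁻¹ * (B * K))) := by
      simp only [Matrix.sub_mul, Matrix.add_mul, Matrix.smul_mul, Matrix.one_mul,
        Matrix.mul_assoc]
      module
    rw [e1] at key
    rw [hBY]
    calc (z • A - 1) * K + (z • (Bᴴ * (R⁻¹ * (B * K))) - z⁻¹ • (Bᴴ * (R⁻¹ * B)))
        = ((z • A - 1) * K + z • (Bᴴ * (R⁻¹ * (B * K)))) - z⁻¹ • (Bᴴ * (R⁻¹ * B)) := by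
          module
      _ = (z⁻¹ • A + z⁻¹ • (Bᴴ * (R⁻¹ * B)) - 1) - z⁻¹ • (Bᴴ * (R⁻¹ * B)) := by rw [key]
      _ = z⁻¹ • A - 1 := by module
  have h12 : (z • A - 1) * (0 : Matrix (Fin n) (Fin m) ℂ)
      + (z • Bᴴ) * ((z⁻¹ ^ 2) • (1 : Matrix (Fin m) (Fin m) ℂ)) = z⁻¹ • Bᴴ := by
    have s1 : z⁻¹ ^ 2 * z = z⁻¹ := by field_simp
    rw [Matrix.mul_zero, zero_add, Matrix.mul_smul, Matrix.mul_one, smul_smul, s1]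
  have h21 : (z • B) * K + (z • D - z ^ 2 • 1 - 1) * Y = z⁻¹ • B := by
    have s2 : -z * z⁻¹ ^ 2 = -z⁻¹ := by field_simp
    rw [hH]
    simp only [Matrix.smul_mul]
    rw [hRY, smul_sub, smul_smul, s2]
    module
  have h22 : (z • B) * (0 : Matrix (Fin n) (Fin m) ℂ)
      + (z • D - z ^ 2 • 1 - 1) * ((z⁻¹ ^ 2) • (1 : Matrix (Fin m) (Fin m) ℂ))
      = z⁻¹ • D - z⁻¹ ^ 2 • 1 - 1 := by
    have s1 : z⁻¹ ^ 2 * -z = -z⁻¹ := by field_simp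
    rw [Matrix.mul_zero, zero_add, hH, Matrix.mul_smul, Matrix.mul_one, smul_smul, s1, hH']
  have hM : gamBlocks A B D z * M = gamBlocks A B D z⁻¹ := by
    rw [hMdef, gamBlocks, gamBlocks, Matrix.fromBlocks_multiply, h11, h21, h12, h22]
  have hMain : (gamBlocks A B D z)⁻¹ * gamBlocks A B D z⁻¹ = M := by
    rw [← hM, ← Matrix.mul_assoc, Matrix.nonsing_inv_mul _ hg, Matrix.one_mul]
  rw [hMain, hMdef]
  constructor
  · simp [Matrix.fromBlocks_neg, Matrix.toBlocks_fromBlocks₁₁, hKdef]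
  · simp [Matrix.fromBlocks_neg, Matrix.toBlocks_fromBlocks₂₂, neg_smul]
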